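/- Let H1, H2 be Hilbert spaces, K : H1 → H2 bounded linear, u† ∈ H1, w† ∈ H2 with u† = K*w† (exact source condition for R(u) = ½‖u‖²_{H1}), η ∈ H1 and δ, α > 0. Let u^δ_α ∈ H1 be the solution of the regularized normal equation K*K u^δ_α + α u^δ_α = K*K u† + δ η − α·0, i.e. K*(K u^δ_α − K u†) + α(u^δ_α − u†) = δη − α K*w†. Then ‖u^δ_α − u†‖²_{H1} ≤ inf_{w ∈ H2} [ (δ²/α²)‖η − K*w‖²_{H1} + (δ²/α)‖w‖²_{H2} ] + α ‖w†‖²_{H2}. -/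

import Mathlib

open scoped RealInnerProductSpace

set_option maxHeartbeats 1000000

/-- The deterministic error estimate behind Theorem 4.3 (quadratic Tikhonov
regularization with large noise): if `u† = K*w†` (exact source condition for
`R = ½‖·‖²`) and `u^δ_α` solves the regularized normal equation
`K*(K u^δ_α − K u†) + α(u^δ_α − u†) = δη − α K*w†`, then
`‖u^δ_α − u†‖² ≤ inf_w [(δ²/α²)‖η − K*w‖² + (δ²/α)‖w‖²] + α‖w†‖²`. -/
theorem stmt17
    {H1 H2 : Type*}
    [NormedAddCommGroup H1] [InnerProductSpace ℝ H1] [CompleteSpace H1]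
    [NormedAddCommGroup H2] [InnerProductSpace ℝ H2] [CompleteSpace H2]
    (K : H1 →L[ℝ] H2)
    (wdag : H2) (udag : H1) (hsource : udag = ContinuousLinearMap.adjoint K wdag)
    (η : H1) (δ α : ℝ) (hδ : 0 < δ) (hα : 0 < α)
    (uδα : H1)
    (heq : ContinuousLinearMap.adjoint K (K uδα - K udag) + α • (uδα - udag)
        = δ • η - α • ContinuousLinearMap.adjoint K wdag) :
    ‖uδα - udag‖ ^ 2
      ≤ (⨅ w : H2, (δ ^ 2 / α ^ 2 * ‖η - ContinuousLinearMap.adjoint K w‖ ^ 2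
          + δ ^ 2 / α * ‖w‖ ^ 2))
        + α * ‖wdag‖ ^ 2 := by
  set e : H1 := uδα - udag with he
  have hKsub : K uδα - K udag = K e := (map_sub K _ _).symm
  rw [hKsub] at heq
  -- take inner product of the normal equation with e
  have key : ‖K e‖ ^ 2 + α * ‖e‖ ^ 2 = δ * ⟪η, e⟫ - α * ⟪wdag, K e⟫ := by
    have h := congrArg (fun x => ⟪x, e⟫) heq
    simp only [inner_add_left, inner_sub_left, real_inner_smul_left,
      ContinuousLinearMap.adjoint_inner_left] at h
    rw [← real_inner_self_eq_norm_sq, ← real_inner_self_eq_norm_sq]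
    linarith [h]
  have hb : ∀ w : H2, ‖e‖ ^ 2 ≤
      δ ^ 2 / α ^ 2 * ‖η - ContinuousLinearMap.adjoint K w‖ ^ 2
        + δ ^ 2 / α * ‖w‖ ^ 2 + α * ‖wdag‖ ^ 2 := by
    intro w
    set A := ‖η - ContinuousLinearMap.adjoint K w‖ with hA
    have hsplit : ⟪η, e⟫ = ⟪η - ContinuousLinearMap.adjoint K w, e⟫ + ⟪w, K e⟫ := by
      rw [inner_sub_left, ← ContinuousLinearMap.adjoint_inner_left]
      ring
    have c1 : ⟪η - ContinuousLinearMap.adjoint K w, e⟫ ≤ A * ‖e‖ :=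
      real_inner_le_norm _ _
    have c2 : ⟪w, K e⟫ ≤ ‖w‖ * ‖K e‖ := real_inner_le_norm _ _
    have c3 : -⟪wdag, K e⟫ ≤ ‖wdag‖ * ‖K e‖ := by
      have := abs_real_inner_le_norm wdag (K e)
      cases' abs_le.mp this with h1 h2
      linarith
    -- reduce to a polynomial inequality (multiply through by α²)
    rw [← mul_le_mul_iff_right₀ (pow_pos hα 2)]
    have expand : α ^ 2 * (δ ^ 2 / α ^ 2 * A ^ 2 + δ ^ 2 / α * ‖w‖ ^ 2
        + α * ‖wdag‖ ^ 2) = δ ^ 2 * A ^ 2 + α * δ ^ 2 * ‖w‖ ^ 2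
        + α ^ 2 * (α * ‖wdag‖ ^ 2) := by
      field_simp
    rw [expand]
    have hkey2 : α * ‖K e‖ ^ 2 + α ^ 2 * ‖e‖ ^ 2
        = α * δ * ⟪η - ContinuousLinearMap.adjoint K w, e⟫
          + α * δ * ⟪w, K e⟫ - α ^ 2 * ⟪wdag, K e⟫ := by
      have := key
      rw [hsplit] at this
      linear_combination α * this
    have p1 : α * δ * ⟪η - ContinuousLinearMap.adjoint K w, e⟫ ≤ α * δ * (A * ‖e‖) :=
      mul_le_mul_of_nonneg_left c1 (by positivity)
    have p2 : α * δ * ⟪w, K e⟫ ≤ α * δ * (‖w‖ * ‖K e‖) :=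
      mul_le_mul_of_nonneg_left c2 (by positivity)
    have p3 : α ^ 2 * (-⟪wdag, K e⟫) ≤ α ^ 2 * (‖wdag‖ * ‖K e‖) :=
      mul_le_mul_of_nonneg_left c3 (by positivity)
    have y1 : α * δ * (A * ‖e‖) ≤ δ ^ 2 * A ^ 2 / 2 + α ^ 2 * ‖e‖ ^ 2 / 2 := by
      nlinarith [sq_nonneg (δ * A - α * ‖e‖)]
    have y2 : α * δ * (‖w‖ * ‖K e‖) ≤ α * δ ^ 2 * ‖w‖ ^ 2 / 2 + α * ‖K e‖ ^ 2 / 2 := by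
      nlinarith [mul_nonneg hα.le (sq_nonneg (δ * ‖w‖ - ‖K e‖))]
    have y3 : α ^ 2 * (‖wdag‖ * ‖K e‖)
        ≤ α ^ 2 * (α * ‖wdag‖ ^ 2) / 2 + α * ‖K e‖ ^ 2 / 2 := by
      nlinarith [mul_nonneg hα.le (sq_nonneg (α * ‖wdag‖ - ‖K e‖))]
    linarith [p1, p2, p3, y1, y2, y3, hkey2]
  have hinf : ‖e‖ ^ 2 - α * ‖wdag‖ ^ 2
      ≤ ⨅ w : H2, (δ ^ 2 / α ^ 2 * ‖η - ContinuousLinearMap.adjoint K w‖ ^ 2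
          + δ ^ 2 / α * ‖w‖ ^ 2) :=
    le_ciInf fun w => by linarith [hb w]
  linarith
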